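/- For real γ > 0, the series S = γ² · Σ_{j,k ≥ 0} 2^{−(j+k)} · ((j+k)!/(γ)_{j+k+2}) · C(j+k, j) converges and equals 1, where C(j+k,j) is the binomial coefficient. Equivalently, γ² · Σ_{N=0}^∞ (N!/(γ)_{N+2}) = 1, after summing over diagonals j+k = N (using Σ_{j=0}^N C(N,j) = 2^N). -/

import Mathlib

/-- Pochhammer symbol `(γ)_n = γ(γ+1)⋯(γ+n−1)`. -/
noncomputable def poch (γ : ℝ) (n : ℕ) : ℝ := ∏ i ∈ Finset.range n, (γ + i)

lemma poch_pos {γ : ℝ} (hγ : 0 < γ) (n : ℕ) : 0 < poch γ n :=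
  Finset.prod_pos fun i _ => by positivity

lemma poch_succ (γ : ℝ) (n : ℕ) : poch γ (n + 1) = poch γ n * (γ + n) :=
  Finset.prod_range_succ _ _

/-- The telescoping term -/
noncomputable def aaux (γ : ℝ) (n : ℕ) : ℝ := γ * n.factorial / poch γ (n + 1)

lemma aaux_zero {γ : ℝ} (hγ : 0 < γ) : aaux γ 0 = 1 := by
  simp [aaux, poch]
  exact hγ.ne'

lemma aaux_nonneg {γ : ℝ} (hγ : 0 < γ) (n : ℕ) : 0 ≤ aaux γ n := by
  have := poch_pos hγ (n + 1)
  have : (0:ℝ) ≤ (n.factorial : ℝ) := by positivity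
  unfold aaux; positivity

lemma telescope {γ : ℝ} (hγ : 0 < γ) (N : ℕ) :
    γ ^ 2 * ((N.factorial : ℝ) / poch γ (N + 2)) = aaux γ N - aaux γ (N + 1) := by
  have h1 : poch γ (N + 2) = poch γ (N + 1) * (γ + (N + 1)) := by
    have := poch_succ γ (N + 1); push_cast at this ⊢; linarith
  have h2 : ((N + 1).factorial : ℝ) = (N + 1) * N.factorial := by
    rw [Nat.factorial_succ]; push_cast; ring
  have hp1 := (poch_pos hγ (N + 1)).ne'
  have hp2 : (γ + (N + 1 : ℝ)) ≠ 0 := by positivity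
  unfold aaux
  rw [h1, h2]
  field_simp
  ring

lemma poch_lower {γ : ℝ} (hγ : 0 < γ) (n : ℕ) :
    γ * n.factorial * (1 + γ * ∑ i ∈ Finset.range n, (1 / (i + 1) : ℝ)) ≤ poch γ (n + 1) := by
  induction n with
  | zero => simp [poch]
  | succ n ih =>
    have hS : (0:ℝ) ≤ ∑ i ∈ Finset.range n, (1 / (i + 1) : ℝ) :=
      Finset.sum_nonneg fun i _ => by positivity
    have hfac : (0:ℝ) < (n.factorial : ℝ) := by positivity
    rw [poch_succ, Finset.sum_range_succ, Nat.factorial_succ]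
    push_cast
    set S := ∑ i ∈ Finset.range n, (1 / (i + 1) : ℝ) with hSdef
    have hpos : (0:ℝ) < (n:ℝ) + 1 := by positivity
    have key : γ * ((n + 1) * n.factorial) * (1 + γ * (S + 1 / (n + 1)))
        ≤ (γ * n.factorial * (1 + γ * S)) * (γ + (n + 1)) := by
      have hexp : γ * (((n:ℝ) + 1) * n.factorial) * (1 + γ * (S + 1 / ((n:ℝ) + 1)))
          = γ * ((n:ℝ) + 1) * n.factorial * (1 + γ * S) + γ ^ 2 * n.factorial := by
        field_simp
        ring
      have hexp2 : (γ * (n.factorial:ℝ) * (1 + γ * S)) * (γ + ((n:ℝ) + 1))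
          = γ * ((n:ℝ) + 1) * n.factorial * (1 + γ * S)
            + (γ ^ 2 * n.factorial + γ ^ 3 * n.factorial * S) := by ring
      rw [hexp, hexp2]
      nlinarith [mul_nonneg (mul_nonneg (pow_nonneg hγ.le 3) hfac.le) hS]
    calc γ * ((n + 1) * n.factorial) * (1 + γ * (S + 1 / (n + 1)))
        ≤ (γ * n.factorial * (1 + γ * S)) * (γ + (n + 1)) := key
      _ ≤ poch γ (n + 1) * (γ + (n + 1)) := by
          have : (0:ℝ) < γ + ((n:ℝ) + 1) := by positivity
          exact mul_le_mul_of_nonneg_right ih this.le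

lemma aaux_tendsto {γ : ℝ} (hγ : 0 < γ) :
    Filter.Tendsto (aaux γ) Filter.atTop (nhds 0) := by
  have hb : ∀ n, aaux γ n ≤ (1 + γ * ∑ i ∈ Finset.range n, (1 / (i + 1) : ℝ))⁻¹ := by
    intro n
    have hS : (0:ℝ) ≤ ∑ i ∈ Finset.range n, (1 / (i + 1) : ℝ) :=
      Finset.sum_nonneg fun i _ => by positivity
    have hd : (0:ℝ) < 1 + γ * ∑ i ∈ Finset.range n, (1 / (i + 1) : ℝ) := by positivity
    have hp := poch_pos hγ (n + 1)
    rw [aaux, div_le_iff₀ hp, inv_mul_eq_div, le_div_iff₀ hd]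
    exact poch_lower hγ n
  have htop : Filter.Tendsto (fun n => 1 + γ * ∑ i ∈ Finset.range n, (1 / (i + 1) : ℝ))
      Filter.atTop Filter.atTop := by
    apply Filter.tendsto_atTop_add_const_left
    exact (Real.tendsto_sum_range_one_div_nat_succ_atTop).const_mul_atTop hγ
  have hinv := htop.inv_tendsto_atTop
  exact squeeze_zero (aaux_nonneg hγ) hb hinv

lemma diag_hasSum {γ : ℝ} (hγ : 0 < γ) :
    HasSum (fun N : ℕ => γ ^ 2 * ((N.factorial : ℝ) / poch γ (N + 2))) 1 := by
  have hnn : ∀ N : ℕ, 0 ≤ γ ^ 2 * ((N.factorial : ℝ) / poch γ (N + 2)) := by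
    intro N
    have := poch_pos hγ (N + 2)
    have : (0:ℝ) ≤ (N.factorial : ℝ) := by positivity
    positivity
  rw [hasSum_iff_tendsto_nat_of_nonneg hnn]
  have hps : ∀ n : ℕ, ∑ N ∈ Finset.range n, γ ^ 2 * ((N.factorial : ℝ) / poch γ (N + 2))
      = 1 - aaux γ n := by
    intro n
    calc ∑ N ∈ Finset.range n, γ ^ 2 * ((N.factorial : ℝ) / poch γ (N + 2))
        = ∑ N ∈ Finset.range n, (aaux γ N - aaux γ (N + 1)) :=
          Finset.sum_congr rfl fun N _ => telescope hγ N
      _ = aaux γ 0 - aaux γ n := Finset.sum_range_sub' (aaux γ) n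
      _ = 1 - aaux γ n := by rw [aaux_zero hγ]
  simp only [hps]
  have := (tendsto_const_nhds (x := (1:ℝ)) (f := Filter.atTop)).sub (aaux_tendsto hγ)
  simpa using this

theorem cyclicity_series (γ : ℝ) (hγ : 0 < γ) :
    HasSum (fun p : ℕ × ℕ =>
        γ ^ 2 * (1 / 2 : ℝ) ^ (p.1 + p.2) * (((p.1 + p.2).factorial : ℝ) / poch γ (p.1 + p.2 + 2)) *
          ((p.1 + p.2).choose p.1 : ℝ)) 1 ∧
      HasSum (fun N : ℕ => γ ^ 2 * ((N.factorial : ℝ) / poch γ (N + 2))) 1 := by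
  have hdiag := diag_hasSum hγ
  set f : ℕ × ℕ → ℝ := fun p =>
    γ ^ 2 * (1 / 2 : ℝ) ^ (p.1 + p.2) * (((p.1 + p.2).factorial : ℝ) / poch γ (p.1 + p.2 + 2)) *
      ((p.1 + p.2).choose p.1 : ℝ) with hf
  refine ⟨?_, hdiag⟩
  rw [← Finset.HasAntidiagonal.sigmaAntidiagonalEquivProd.hasSum_iff]
  have hfib : ∀ n : ℕ, HasSum (fun c : Finset.HasAntidiagonal.antidiagonal n =>
      (f ∘ Finset.HasAntidiagonal.sigmaAntidiagonalEquivProd) ⟨n, c⟩)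
      (γ ^ 2 * ((n.factorial : ℝ) / poch γ (n + 2))) := by
    intro n
    have hF : (fun c : Finset.HasAntidiagonal.antidiagonal n =>
        (f ∘ Finset.HasAntidiagonal.sigmaAntidiagonalEquivProd) ⟨n, c⟩) = fun c : Finset.HasAntidiagonal.antidiagonal n => f ↑c := by
      funext c
      simp [Function.comp, Finset.HasAntidiagonal.sigmaAntidiagonalEquivProd]
    rw [hF]
    have hsum : ∑ c : Finset.HasAntidiagonal.antidiagonal n, f ↑c
        = γ ^ 2 * ((n.factorial : ℝ) / poch γ (n + 2)) := by
      rw [Finset.sum_coe_sort (Finset.HasAntidiagonal.antidiagonal n) f,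
        Finset.Nat.sum_antidiagonal_eq_sum_range_succ_mk]
      have hterm : ∀ i ∈ Finset.range (n + 1), f (i, n - i)
          = γ ^ 2 * (1 / 2 : ℝ) ^ n * ((n.factorial : ℝ) / poch γ (n + 2)) * (n.choose i : ℝ) := by
        intro i hi
        have h : i + (n - i) = n := Nat.add_sub_cancel' (Nat.lt_succ_iff.mp (Finset.mem_range.mp hi))
        simp only [hf]
        rw [h]
      rw [Finset.sum_congr rfl hterm, ← Finset.mul_sum]
      have h2 : ∑ i ∈ Finset.range (n + 1), (n.choose i : ℝ) = 2 ^ n := by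
        exact_mod_cast Nat.sum_range_choose n
      rw [h2]
      have h3 : ((1 : ℝ) / 2) ^ n * 2 ^ n = 1 := by rw [← mul_pow]; norm_num
      linear_combination (γ ^ 2 * ((n.factorial : ℝ) / poch γ (n + 2))) * h3
    rw [← hsum]
    exact hasSum_fintype _
  have hnn : ∀ x : (Σ n : ℕ, Finset.HasAntidiagonal.antidiagonal n),
      0 ≤ (f ∘ Finset.HasAntidiagonal.sigmaAntidiagonalEquivProd) x := by
    rintro ⟨n, ⟨p, hp⟩⟩
    have h1 := poch_pos hγ (p.1 + p.2 + 2)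
    have h2 : (0:ℝ) ≤ ((p.1 + p.2).factorial : ℝ) := by positivity
    have h3 : (0:ℝ) ≤ ((p.1 + p.2).choose p.1 : ℝ) := by positivity
    simp only [Function.comp, hf, Finset.HasAntidiagonal.sigmaAntidiagonalEquivProd_apply]
    positivity
  have hsum : Summable (f ∘ Finset.HasAntidiagonal.sigmaAntidiagonalEquivProd) := by
    rw [summable_sigma_of_nonneg hnn]
    refine ⟨fun n => (hfib n).summable, ?_⟩
    have : (fun n : ℕ => ∑' c : Finset.HasAntidiagonal.antidiagonal n,
        (f ∘ Finset.HasAntidiagonal.sigmaAntidiagonalEquivProd) ⟨n, c⟩)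
        = fun n : ℕ => γ ^ 2 * ((n.factorial : ℝ) / poch γ (n + 2)) :=
      funext fun n => (hfib n).tsum_eq
    rw [this]
    exact hdiag.summable
  exact hdiag.sigma_of_hasSum hfib hsum
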